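/- arXiv:2411.08271 — 3 statements merged into one kernel-verified Lean document; each statement's English description precedes it below -/
import Mathlib

section
/- For ε > 0 and k ≥ 2, the piecewise function F_k^ε (equal to F(ρ) = ρ ln ρ − ρ for ρ ≥ ε² and to P_{k+1}^ε(ρ) for 0 ≤ ρ < ε²) is differentiable at ρ = ε² with derivative ln(ε²): both one-sided derivatives agree and equal ln(ε²). -/
/-- The piecewise regularized energy density `F_k^ε` (equal to `F ρ = ρ ln ρ − ρ` for
`ρ ≥ ε²` and to `P_{k+1}^ε(ρ)` for `ρ < ε²`) is differentiable at `ρ = ε²`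
with derivative `ln(ε²)`. -/
theorem stmt6 (ε : ℝ) (hε : 0 < ε) (k : ℕ) (hk : 2 ≤ k)
    (P : ℝ → ℝ)
    (hP : ∀ ρ : ℝ, P ρ =
      ρ * (Real.log (ε ^ 2) - 1 - ∑ j ∈ Finset.Icc 1 k, (1 / (j : ℝ)) * (1 - ρ / ε ^ 2) ^ j))
    (Fk : ℝ → ℝ)
    (hFk : ∀ ρ : ℝ, Fk ρ = if ε ^ 2 ≤ ρ then ρ * Real.log ρ - ρ else P ρ) :
    HasDerivAt Fk (Real.log (ε ^ 2)) (ε ^ 2) := by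
  have hε2 : (0:ℝ) < ε ^ 2 := by positivity
  have hε2ne : (ε:ℝ) ^ 2 ≠ 0 := ne_of_gt hε2
  -- value of Fk at ε^2
  have hval : Fk (ε ^ 2) = ε ^ 2 * Real.log (ε ^ 2) - ε ^ 2 := by
    rw [hFk]; simp
  -- right piece: ρ log ρ - ρ
  have hg : HasDerivAt (fun ρ : ℝ => ρ * Real.log ρ - ρ) (Real.log (ε ^ 2)) (ε ^ 2) := by
    have h1 := Real.hasDerivAt_mul_log hε2ne
    have h2 := h1.sub (hasDerivAt_id (ε ^ 2))
    have h2' : HasDerivAt (fun ρ : ℝ => ρ * Real.log ρ - ρ) _ (ε ^ 2) := h2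
    simpa using h2'
  -- derivative of the sum S at ε^2 is -(1/ε^2)
  have hS : HasDerivAt
      (fun ρ : ℝ => ∑ j ∈ Finset.Icc 1 k, (1 / (j : ℝ)) * (1 - ρ / ε ^ 2) ^ j)
      (-(1 / ε ^ 2)) (ε ^ 2) := by
    have hu : HasDerivAt (fun ρ : ℝ => 1 - ρ / ε ^ 2) (-(1 / ε ^ 2)) (ε ^ 2) := by
      have := (hasDerivAt_id (ε ^ 2)).div_const (ε ^ 2)
      have := (hasDerivAt_const (ε ^ 2) (1:ℝ)).sub this
      have this' : HasDerivAt (fun ρ : ℝ => 1 - ρ / ε ^ 2) _ (ε ^ 2) := this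
      simpa [one_div] using this'
    have hu0 : (1 : ℝ) - ε ^ 2 / ε ^ 2 = 0 := by field_simp; norm_num
    have hterm : ∀ j ∈ Finset.Icc 1 k,
        HasDerivAt (fun ρ : ℝ => (1 / (j : ℝ)) * (1 - ρ / ε ^ 2) ^ j)
          ((1 / (j : ℝ)) * ((j : ℝ) * (1 - ε ^ 2 / ε ^ 2) ^ (j - 1) * (-(1 / ε ^ 2)))) (ε ^ 2) := by
      intro j hj
      exact (hu.pow j).const_mul _
    have hsum := HasDerivAt.fun_sum hterm
    have hval : (∑ j ∈ Finset.Icc 1 k,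
        (1 / (j : ℝ)) * ((j : ℝ) * (1 - ε ^ 2 / ε ^ 2) ^ (j - 1) * (-(1 / ε ^ 2))))
        = -(1 / ε ^ 2) := by
      rw [Finset.sum_eq_single 1]
      · norm_num
      · intro j hj hne
        have hj1 : 1 ≤ j := (Finset.mem_Icc.mp hj).1
        have : 1 ≤ j - 1 := by omega
        rw [hu0, zero_pow (by omega : j - 1 ≠ 0)]
        ring
      · intro h
        exact absurd (Finset.mem_Icc.mpr ⟨le_refl 1, by omega⟩) h
    rwa [hval] at hsum
  have hS0 : (∑ j ∈ Finset.Icc 1 k, (1 / (j : ℝ)) * (1 - ε ^ 2 / ε ^ 2) ^ j) = 0 := by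
    apply Finset.sum_eq_zero
    intro j hj
    have hj1 : 1 ≤ j := (Finset.mem_Icc.mp hj).1
    have : (1 : ℝ) - ε ^ 2 / ε ^ 2 = 0 := by field_simp; norm_num
    rw [this, zero_pow (by omega : j ≠ 0)]
    ring
  -- left piece : P
  have hPder : HasDerivAt P (Real.log (ε ^ 2)) (ε ^ 2) := by
    have h1 : HasDerivAt
        (fun ρ : ℝ => Real.log (ε ^ 2) - 1 -
          ∑ j ∈ Finset.Icc 1 k, (1 / (j : ℝ)) * (1 - ρ / ε ^ 2) ^ j)
        (-(-(1 / ε ^ 2))) (ε ^ 2) := by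
      have h : HasDerivAt (fun ρ : ℝ => Real.log (ε ^ 2) - 1 - ∑ j ∈ Finset.Icc 1 k, (1 / (j : ℝ)) * (1 - ρ / ε ^ 2) ^ j) _ (ε ^ 2) :=
        (hasDerivAt_const (ε ^ 2) (Real.log (ε ^ 2) - 1)).sub hS
      convert h using 1
      ring
    have h2 : HasDerivAt (fun ρ : ℝ => ρ * (Real.log (ε ^ 2) - 1 - ∑ j ∈ Finset.Icc 1 k, (1 / (j : ℝ)) * (1 - ρ / ε ^ 2) ^ j)) _ (ε ^ 2) :=
      (hasDerivAt_id (ε ^ 2)).mul h1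
    have h3 : HasDerivAt
        (fun ρ : ℝ => ρ * (Real.log (ε ^ 2) - 1 -
          ∑ j ∈ Finset.Icc 1 k, (1 / (j : ℝ)) * (1 - ρ / ε ^ 2) ^ j))
        (Real.log (ε ^ 2)) (ε ^ 2) := by
      convert h2 using 1
      rw [hS0]
      field_simp
      simp only [id]; ring
    have heq : P = (fun ρ : ℝ => ρ * (Real.log (ε ^ 2) - 1 -
        ∑ j ∈ Finset.Icc 1 k, (1 / (j : ℝ)) * (1 - ρ / ε ^ 2) ^ j)) := funext hP
    rw [heq]; exact h3
  -- combine via one-sided derivatives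
  have hright : HasDerivWithinAt Fk (Real.log (ε ^ 2)) (Set.Ici (ε ^ 2)) (ε ^ 2) := by
    apply (hg.hasDerivWithinAt).congr
    · intro y hy
      rw [hFk]
      simp [Set.mem_Ici.mp hy]
    · rw [hval]
  have hleft : HasDerivWithinAt Fk (Real.log (ε ^ 2)) (Set.Iic (ε ^ 2)) (ε ^ 2) := by
    apply (hPder.hasDerivWithinAt).congr
    · intro y hy
      rw [hFk]
      rcases lt_or_eq_of_le (Set.mem_Iic.mp hy) with h | h
      · rw [if_neg (not_le.mpr h)]
      · subst h
        rw [if_pos le_rfl, hP, hS0]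
        ring
    · rw [hval, hP, hS0]; ring
  have := hleft.union hright
  rw [Set.Iic_union_Ici] at this
  exact this.hasDerivAt (by simp)
end

section
/- If the relaxation coefficient satisfies γ_n = 1 + O(τ^{p−1}) and the base IMEX RK update Φ_n has local truncation error O(τ^{p+1}), then the relaxed update u^{ε,n+1}_γ = Φ_n + (γ_n − 1)(Φ_n − u^{ε,n}_γ) evaluated at the shifted time t̂_{n+1} = t̂_n + γ_n τ also has local truncation error O(τ^{p+1}). -/
lemma taylor_bound_aux {H : Type*} [NormedAddCommGroup H] [NormedSpace ℝ H]
    (u : ℝ → H) (hu : ContDiff ℝ 2 u) {lo hi M : ℝ}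
    (hM : ∀ x ∈ Set.Icc lo hi, ‖deriv (deriv u) x‖ ≤ M)
    {a b : ℝ} (ha : a ∈ Set.Icc lo hi) (hb : b ∈ Set.Icc lo hi) :
    ‖u b - u a - (b - a) • deriv u a‖ ≤ M * |b - a| ^ 2 := by
  have hud : Differentiable ℝ u := hu.differentiable (by norm_num)
  have hu2 : ContDiff ℝ ((1 : ℕ) + 1) u := by exact_mod_cast hu
  have h1 : ContDiff ℝ (1 : ℕ) (deriv u) := (contDiff_succ_iff_deriv.mp hu2).2.2
  have hDd : Differentiable ℝ (deriv u) := h1.differentiable (by norm_num)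
  have hM0 : 0 ≤ M := le_trans (norm_nonneg _) (hM a ha)
  have hsub : Set.uIcc a b ⊆ Set.Icc lo hi := Set.uIcc_subset_Icc ha hb
  have keyabs : ∀ x ∈ Set.uIcc a b, |x - a| ≤ |b - a| := by
    intro x hx
    rcases le_total a b with hab | hab
    · rw [Set.uIcc_of_le hab] at hx
      rw [abs_of_nonneg (by linarith [hx.1]), abs_of_nonneg (by linarith)]
      linarith [hx.2]
    · rw [Set.uIcc_of_ge hab] at hx
      rw [abs_of_nonpos (by linarith [hx.2]), abs_of_nonpos (by linarith)]
      linarith [hx.1]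
  have hlip : ∀ x ∈ Set.uIcc a b, ‖deriv u x - deriv u a‖ ≤ M * |b - a| := by
    intro x hx
    have h := (convex_uIcc a b).norm_image_sub_le_of_norm_hasDerivWithin_le
      (fun y hy => (hDd y).hasDerivAt.hasDerivWithinAt)
      (fun y hy => hM y (hsub hy)) (Set.left_mem_uIcc) hx
    calc ‖deriv u x - deriv u a‖ ≤ M * ‖x - a‖ := h
      _ ≤ M * |b - a| := by
          rw [Real.norm_eq_abs]
          exact mul_le_mul_of_nonneg_left (keyabs x hx) hM0
  set d := deriv u a with hd
  have hg : ∀ x ∈ Set.uIcc a b,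
      HasDerivWithinAt (fun x => u x - x • d) (deriv u x - d) (Set.uIcc a b) x := by
    intro x hx
    have h1 : HasDerivAt (fun x : ℝ => x • d) ((1 : ℝ) • d) x :=
      (hasDerivAt_id x).smul_const d
    have := ((hud x).hasDerivAt.sub h1)
    simp only [one_smul] at this
    exact this.hasDerivWithinAt
  have hmain := (convex_uIcc a b).norm_image_sub_le_of_norm_hasDerivWithin_le
    hg hlip (Set.right_mem_uIcc) (Set.left_mem_uIcc)
  have heq : u b - b • d - (u a - a • d) = u b - u a - (b - a) • d := by
    rw [sub_smul]; abel
  calc ‖u b - u a - (b - a) • d‖ ≤ M * |b - a| * ‖a - b‖ := by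
        rw [← heq, norm_sub_rev]; exact hmain
    _ = M * |b - a| ^ 2 := by rw [Real.norm_eq_abs, abs_sub_comm]; ring


/-- If the relaxation coefficient satisfies `γ(τ) = 1 + O(τ^{p−1})` and the base IMEX RK
update `Φ(τ)` has local truncation error `O(τ^{p+1})` (i.e. `Φ(τ) = u(tn + τ) + O(τ^{p+1})`),
then the relaxed update `Φ + (γ − 1)(Φ − u(tn))`, compared with the exact solution at the
shifted time `tn + γτ`, also has local truncation error `O(τ^{p+1})`. -/
theorem stmt13 {H : Type*} [NormedAddCommGroup H] [NormedSpace ℝ H]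
    (u : ℝ → H) (hu : ContDiff ℝ 2 u)
    (p : ℕ) (hp : 2 ≤ p) (tn : ℝ)
    (γ : ℝ → ℝ) (Φ : ℝ → H) (τ₀ C₁ C₂ : ℝ) (hτ₀ : 0 < τ₀)
    (hΦ : ∀ τ ∈ Set.Ioc (0 : ℝ) τ₀, ‖Φ τ - u (tn + τ)‖ ≤ C₁ * τ ^ (p + 1))
    (hγ : ∀ τ ∈ Set.Ioc (0 : ℝ) τ₀, |γ τ - 1| ≤ C₂ * τ ^ (p - 1)) :
    ∃ C₃ > (0 : ℝ), ∃ τ₁ > (0 : ℝ), ∀ τ ∈ Set.Ioc (0 : ℝ) τ₁,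
      ‖u (tn + γ τ * τ) - Φ τ - (γ τ - 1) • (Φ τ - u tn)‖ ≤ C₃ * τ ^ (p + 1) := by
  -- nonnegativity of constants
  have hpow0 : (0:ℝ) < τ₀ ^ (p + 1) := pow_pos hτ₀ _
  have hpow1 : (0:ℝ) < τ₀ ^ (p - 1) := pow_pos hτ₀ _
  have hC₁0 : 0 ≤ C₁ := by
    have := (norm_nonneg _).trans (hΦ τ₀ ⟨hτ₀, le_rfl⟩)
    nlinarith
  have hC₂0 : 0 ≤ C₂ := by
    have := (abs_nonneg _).trans (hγ τ₀ ⟨hτ₀, le_rfl⟩)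
    nlinarith
  -- bound on second derivative on [tn, tn+2]
  have hu2 : ContDiff ℝ ((1 : ℕ) + 1) u := by exact_mod_cast hu
  have h1 : ContDiff ℝ (1 : ℕ) (deriv u) := (contDiff_succ_iff_deriv.mp hu2).2.2
  have hcont : Continuous (deriv (deriv u)) := h1.continuous_deriv le_rfl
  obtain ⟨M, hMb⟩ := (isCompact_Icc (a := tn) (b := tn + 2)).exists_bound_of_continuousOn
    hcont.continuousOn
  set M' : ℝ := max M 0 with hM'
  have hM'0 : 0 ≤ M' := le_max_right _ _
  have hMb' : ∀ x ∈ Set.Icc tn (tn + 2), ‖deriv (deriv u) x‖ ≤ M' :=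
    fun x hx => (hMb x hx).trans (le_max_left _ _)
  refine ⟨2 * M' * C₂ + 2 * C₁ + 1, by positivity,
    min τ₀ (min 1 (1 / (C₂ + 1))), by positivity, ?_⟩
  intro τ hτ
  obtain ⟨hτpos, hτle⟩ := hτ
  have hττ₀ : τ ≤ τ₀ := hτle.trans (min_le_left _ _)
  have hτ1 : τ ≤ 1 := hτle.trans ((min_le_right _ _).trans (min_le_left _ _))
  have hτC : τ ≤ 1 / (C₂ + 1) := hτle.trans ((min_le_right _ _).trans (min_le_right _ _))
  have hmem : τ ∈ Set.Ioc (0:ℝ) τ₀ := ⟨hτpos, hττ₀⟩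
  have hγτ : |γ τ - 1| ≤ C₂ * τ ^ (p - 1) := hγ τ hmem
  have hΦτ : ‖Φ τ - u (tn + τ)‖ ≤ C₁ * τ ^ (p + 1) := hΦ τ hmem
  have hpowτ : τ ^ (p - 1) ≤ τ := by
    have := pow_le_pow_of_le_one hτpos.le hτ1 (show 1 ≤ p - 1 by omega)
    simpa using this
  have hγle : C₂ * τ ^ (p - 1) ≤ 1 := by
    have h2 : C₂ * τ ^ (p - 1) ≤ C₂ * τ := mul_le_mul_of_nonneg_left hpowτ hC₂0
    have h3 : C₂ * τ ≤ C₂ * (1 / (C₂ + 1)) := mul_le_mul_of_nonneg_left hτC hC₂0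
    have h4 : C₂ * (1 / (C₂ + 1)) ≤ 1 := by
      rw [mul_one_div, div_le_one (by linarith)]; linarith
    linarith
  have hγ1 : |γ τ - 1| ≤ 1 := hγτ.trans hγle
  have hγabs := abs_le.mp hγ1
  have hγlo : 0 ≤ γ τ := by linarith [hγabs.1]
  have hγhi : γ τ ≤ 2 := by linarith [hγabs.2]
  -- membership of the three points
  have hmem1 : tn ∈ Set.Icc tn (tn + 2) := ⟨le_rfl, by linarith⟩
  have hmem2 : tn + τ ∈ Set.Icc tn (tn + 2) := ⟨by linarith, by linarith⟩
  have hmem3 : tn + γ τ * τ ∈ Set.Icc tn (tn + 2) := by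
    constructor
    · nlinarith
    · nlinarith
  set d := deriv u (tn + τ) with hd
  have T1 := taylor_bound_aux u hu hMb' hmem2 hmem3
  have T2 := taylor_bound_aux u hu hMb' hmem2 hmem1
  have hs1 : tn + γ τ * τ - (tn + τ) = (γ τ - 1) * τ := by ring
  have hs2 : tn - (tn + τ) = -τ := by ring
  rw [hs1] at T1
  rw [hs2] at T2
  -- algebraic identity
  have key : u (tn + γ τ * τ) - Φ τ - (γ τ - 1) • (Φ τ - u tn)
      = (u (tn + γ τ * τ) - u (tn + τ) - ((γ τ - 1) * τ) • d)
        + (γ τ - 1) • (u tn - u (tn + τ) - (-τ) • d)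
        + (γ τ) • (u (tn + τ) - Φ τ) := by module
  rw [key]
  have tri : ‖(u (tn + γ τ * τ) - u (tn + τ) - ((γ τ - 1) * τ) • d)
        + (γ τ - 1) • (u tn - u (tn + τ) - (-τ) • d)
        + (γ τ) • (u (tn + τ) - Φ τ)‖
      ≤ ‖u (tn + γ τ * τ) - u (tn + τ) - ((γ τ - 1) * τ) • d‖
        + |γ τ - 1| * ‖u tn - u (tn + τ) - (-τ) • d‖
        + |γ τ| * ‖u (tn + τ) - Φ τ‖ := by
    calc _ ≤ ‖(u (tn + γ τ * τ) - u (tn + τ) - ((γ τ - 1) * τ) • d)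
          + (γ τ - 1) • (u tn - u (tn + τ) - (-τ) • d)‖
          + ‖(γ τ) • (u (tn + τ) - Φ τ)‖ := norm_add_le _ _
      _ ≤ _ := by
          rw [norm_smul, Real.norm_eq_abs]
          gcongr
          calc _ ≤ ‖u (tn + γ τ * τ) - u (tn + τ) - ((γ τ - 1) * τ) • d‖
                + ‖(γ τ - 1) • (u tn - u (tn + τ) - (-τ) • d)‖ := norm_add_le _ _
            _ = _ := by rw [norm_smul, Real.norm_eq_abs]
  refine tri.trans ?_
  -- individual bounds
  have hb1 : ‖u (tn + γ τ * τ) - u (tn + τ) - ((γ τ - 1) * τ) • d‖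
      ≤ M' * C₂ * τ ^ (p + 1) := by
    refine T1.trans ?_
    have habs : |(γ τ - 1) * τ| ^ 2 ≤ (C₂ * τ ^ (p - 1)) * τ * τ := by
      rw [abs_mul, abs_of_pos hτpos]
      have h0 : 0 ≤ |γ τ - 1| * τ := mul_nonneg (abs_nonneg _) hτpos.le
      calc (|γ τ - 1| * τ) ^ 2 = (|γ τ - 1| * τ) * (|γ τ - 1| * τ) := sq _
        _ ≤ ((C₂ * τ ^ (p - 1)) * τ) * (1 * τ) := by
            apply mul_le_mul _ _ h0 (by positivity)
            · exact mul_le_mul_of_nonneg_right hγτ hτpos.le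
            · exact mul_le_mul_of_nonneg_right hγ1 hτpos.le
        _ = (C₂ * τ ^ (p - 1)) * τ * τ := by ring
    have hpoweq : τ ^ (p - 1) * τ * τ = τ ^ (p + 1) := by
      rw [← pow_succ, ← pow_succ]
      congr 1
      omega
    calc M' * |(γ τ - 1) * τ| ^ 2 ≤ M' * ((C₂ * τ ^ (p - 1)) * τ * τ) :=
          mul_le_mul_of_nonneg_left habs hM'0
      _ = M' * C₂ * (τ ^ (p - 1) * τ * τ) := by ring
      _ = M' * C₂ * τ ^ (p + 1) := by rw [hpoweq]
  have hb2 : |γ τ - 1| * ‖u tn - u (tn + τ) - (-τ) • d‖ ≤ M' * C₂ * τ ^ (p + 1) := by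
    have h2 : ‖u tn - u (tn + τ) - (-τ) • d‖ ≤ M' * τ ^ 2 := by
      refine T2.trans ?_
      rw [abs_neg, abs_of_pos hτpos]
    have hpoweq : τ ^ (p - 1) * τ ^ 2 = τ ^ (p + 1) := by
      rw [← pow_add]; congr 1; omega
    calc |γ τ - 1| * ‖u tn - u (tn + τ) - (-τ) • d‖
        ≤ (C₂ * τ ^ (p - 1)) * (M' * τ ^ 2) := by
          apply mul_le_mul hγτ h2 (norm_nonneg _) (by positivity)
      _ = M' * C₂ * (τ ^ (p - 1) * τ ^ 2) := by ring
      _ = M' * C₂ * τ ^ (p + 1) := by rw [hpoweq]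
  have hb3 : |γ τ| * ‖u (tn + τ) - Φ τ‖ ≤ 2 * C₁ * τ ^ (p + 1) := by
    rw [norm_sub_rev]
    calc |γ τ| * ‖Φ τ - u (tn + τ)‖ ≤ 2 * (C₁ * τ ^ (p + 1)) := by
          apply mul_le_mul _ hΦτ (norm_nonneg _) (by norm_num)
          rw [abs_of_nonneg hγlo]; exact hγhi
      _ = 2 * C₁ * τ ^ (p + 1) := by ring
  have hpowpos : (0:ℝ) < τ ^ (p + 1) := pow_pos hτpos _
  nlinarith [hb1, hb2, hb3]
end

section
/- For ε > 0 and k ≥ 2, and for all ρ ≥ 0, F_k^ε(ρ) ≥ F(ρ) − C_k ρ where F(ρ) = ρ ln ρ − ρ and C_k = (k+1)/k + Σ_{j=1}^{k−1} 1/j; more simply, for ρ ∈ (0, ε²], the difference satisfies |f_k^ε(ρ) − ln ρ| ≤ C_k + ln(ε²/ρ), quantifying the regularization error of the nonlinearity. -/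
lemma sum_pow_nonneg (u : ℝ) (hu : 0 ≤ u) (m : ℕ) :
    0 ≤ ∑ j ∈ Finset.Icc 1 m, (1 / (j : ℝ)) * u ^ j := by
  apply Finset.sum_nonneg
  intro j hj
  positivity

lemma sum_pow_le (u : ℝ) (hu0 : 0 ≤ u) (hu1 : u ≤ 1) (m : ℕ) :
    ∑ j ∈ Finset.Icc 1 m, (1 / (j : ℝ)) * u ^ j ≤ ∑ j ∈ Finset.Icc 1 m, (1 / (j : ℝ)) := by
  apply Finset.sum_le_sum
  intro j hj
  have h1 : u ^ j ≤ 1 := pow_le_one₀ hu0 hu1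
  have h2 : (0:ℝ) ≤ 1 / j := by positivity
  nlinarith [pow_nonneg hu0 j]

/-- Regularization error of the energy density and nonlinearity: with
`C_k = (k+1)/k + Σ_{j=1}^{k−1} 1/j`, one has `F_k^ε(ρ) ≥ F(ρ) − C_k ρ` for all `ρ ≥ 0`
(`F ρ = ρ ln ρ − ρ`), and for `ρ ∈ (0, ε²]` the nonlinearity satisfies
`|f_k^ε(ρ) − ln ρ| ≤ C_k + ln(ε²/ρ)`. -/
theorem stmt16 (ε : ℝ) (hε : 0 < ε) (k : ℕ) (hk : 2 ≤ k)
    (Ck : ℝ) (hCk : Ck = ((k : ℝ) + 1) / k + ∑ j ∈ Finset.Icc 1 (k - 1), (1 / (j : ℝ)))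
    (F : ℝ → ℝ) (hF : ∀ ρ : ℝ, F ρ = ρ * Real.log ρ - ρ)
    (P : ℝ → ℝ)
    (hP : ∀ ρ : ℝ, P ρ =
      ρ * (Real.log (ε ^ 2) - 1 - ∑ j ∈ Finset.Icc 1 k, (1 / (j : ℝ)) * (1 - ρ / ε ^ 2) ^ j))
    (Fk : ℝ → ℝ)
    (hFk : ∀ ρ : ℝ, Fk ρ = if ε ^ 2 ≤ ρ then F ρ else P ρ)
    (f : ℝ → ℝ)
    (hf : ∀ ρ : ℝ, 0 < ρ → ρ < ε ^ 2 → f ρ =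
      Real.log (ε ^ 2) - ((k : ℝ) + 1) / k * (1 - ρ / ε ^ 2) ^ k
        - ∑ j ∈ Finset.Icc 1 (k - 1), (1 / (j : ℝ)) * (1 - ρ / ε ^ 2) ^ j)
    (hf' : ∀ ρ : ℝ, ε ^ 2 ≤ ρ → f ρ = Real.log ρ) :
    (∀ ρ : ℝ, 0 ≤ ρ → F ρ - Ck * ρ ≤ Fk ρ) ∧
      (∀ ρ ∈ Set.Ioc (0 : ℝ) (ε ^ 2),
        |f ρ - Real.log ρ| ≤ Ck + Real.log (ε ^ 2 / ρ)) := by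
  have hε2 : (0:ℝ) < ε ^ 2 := by positivity
  have hkpos : (0:ℝ) < (k:ℝ) := by positivity
  have hsum_nn : (0:ℝ) ≤ ∑ j ∈ Finset.Icc 1 (k - 1), (1 / (j : ℝ)) := by
    apply Finset.sum_nonneg; intro j hj; positivity
  have hCknn : 0 ≤ Ck := by
    rw [hCk]
    have : (0:ℝ) ≤ ((k:ℝ) + 1) / k := by positivity
    linarith
  -- sum over Icc 1 k of 1/j equals sum over Icc 1 (k-1) plus 1/k
  have hsplit : ∑ j ∈ Finset.Icc 1 k, (1 / (j : ℝ))
      = (∑ j ∈ Finset.Icc 1 (k - 1), (1 / (j : ℝ))) + 1 / (k : ℝ) := by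
    obtain ⟨m, hm⟩ : ∃ m, k = m + 1 := ⟨k - 1, by omega⟩
    subst hm
    have hm1 : m + 1 - 1 = m := by omega
    rw [hm1]
    exact Finset.sum_Icc_succ_top (by omega) (fun j : ℕ => (1 / (j : ℝ)))
  have hharm_le : ∑ j ∈ Finset.Icc 1 k, (1 / (j : ℝ)) ≤ Ck := by
    rw [hsplit, hCk]
    have : (1:ℝ) / k ≤ ((k:ℝ) + 1) / k := by gcongr <;> linarith
    linarith
  constructor
  · intro ρ hρ
    rw [hFk]
    split_ifs with h
    · nlinarith
    · push_neg at h
      rw [hP, hF]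
      rcases eq_or_lt_of_le hρ with h0 | h0
      · simp [← h0]
      · set u := 1 - ρ / ε ^ 2 with hu
        have hu0 : 0 ≤ u := by
          rw [hu]
          have : ρ / ε ^ 2 ≤ 1 := by
            rw [div_le_one hε2]; linarith
          linarith
        have hu1 : u ≤ 1 := by
          rw [hu]
          have : 0 ≤ ρ / ε ^ 2 := by positivity
          linarith
        have hS := sum_pow_le u hu0 hu1 k
        have hlog : Real.log ρ ≤ Real.log (ε ^ 2) :=
          Real.log_le_log h0 (le_of_lt h)
        have key : Real.log ρ - 1 - Ck ≤
            Real.log (ε ^ 2) - 1 - ∑ j ∈ Finset.Icc 1 k, (1 / (j : ℝ)) * u ^ j := by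
          linarith
        nlinarith [mul_le_mul_of_nonneg_left key (le_of_lt h0)]
  · rintro ρ ⟨hρ0, hρε⟩
    have hlogq : 0 ≤ Real.log (ε ^ 2 / ρ) := by
      apply Real.log_nonneg
      rw [le_div_iff₀ hρ0]; linarith
    have hlogd : Real.log (ε ^ 2 / ρ) = Real.log (ε ^ 2) - Real.log ρ :=
      Real.log_div (ne_of_gt hε2) (ne_of_gt hρ0)
    rcases eq_or_lt_of_le hρε with heq | hlt
    · rw [hf' ρ (le_of_eq heq.symm), sub_self, abs_zero]
      linarith
    · rw [hf ρ hρ0 hlt]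
      set u := 1 - ρ / ε ^ 2 with hu
      have hu0 : 0 ≤ u := by
        rw [hu]
        have : ρ / ε ^ 2 ≤ 1 := by rw [div_le_one hε2]; linarith
        linarith
      have hu1 : u ≤ 1 := by
        rw [hu]
        have : 0 ≤ ρ / ε ^ 2 := by positivity
        linarith
      have hA0 : 0 ≤ ((k : ℝ) + 1) / k * u ^ k := by positivity
      have hAle : ((k : ℝ) + 1) / k * u ^ k ≤ ((k : ℝ) + 1) / k := by
        have h1 : u ^ k ≤ 1 := pow_le_one₀ hu0 hu1
        have h2 : (0:ℝ) ≤ ((k:ℝ)+1)/k := by positivity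
        nlinarith
      have hB0 := sum_pow_nonneg u hu0 (k - 1)
      have hBle := sum_pow_le u hu0 hu1 (k - 1)
      rw [abs_le]
      constructor
      · rw [hCk] at *
        linarith
      · linarith
end
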